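/- Let L be a finite-dimensional Lie algebra over a field F with d(L) = dim_F L, and let A be a maximal abelian subalgebra of L containing [L,L]. Then for every x ∈ L, the adjoint action ad(x) restricted to A is multiplication by a scalar in F. -/

import Mathlib

/-- The minimal number of generators of a Lie algebra `L` over `R`. -/
noncomputable def lieD (R L : Type*) [CommRing R] [LieRing L] [LieAlgebra R L] : ℕ :=
  sInf {n | ∃ s : Finset L, s.card = n ∧ LieSubalgebra.lieSpan R L ↑s = ⊤}

/-- Auxiliary lemma: if `⁅x,a⁆ ∉ span {x, a}`, then `L` is Lie-generated by a proper
hyperplane containing `x` and `a`, contradicting `lieD F L = finrank F L`. -/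
lemma lieD_aux (F L : Type*) [Field F] [LieRing L] [LieAlgebra F L]
    [FiniteDimensional F L] (h : lieD F L = Module.finrank F L) (x a : L)
    (hna : ⁅x, a⁆ ∉ Submodule.span F ({x, a} : Set L)) : False := by
  classical
  set z := ⁅x, a⁆ with hz
  obtain ⟨f, hfz, hfW⟩ :=
    Submodule.exists_dual_map_eq_bot_of_notMem hna inferInstance
  have hW : ∀ w ∈ Submodule.span F ({x, a} : Set L), f w = 0 := by
    intro w hw
    have : f w ∈ (Submodule.span F ({x, a} : Set L)).map f := ⟨w, hw, rfl⟩
    rw [hfW] at this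
    exact (Submodule.mem_bot F).mp this
  set H := LinearMap.ker f with hH
  have hxH : x ∈ H := hW x (Submodule.subset_span (by simp))
  have haH : a ∈ H := hW a (Submodule.subset_span (by simp))
  let b := Module.finBasis F H
  have hinj : Function.Injective (fun i => ((b i : H) : L)) :=
    Subtype.val_injective.comp b.injective
  set s : Finset L := Finset.univ.image (fun i => ((b i : H) : L)) with hs
  have hcard : s.card = Module.finrank F H := by
    rw [hs, Finset.card_image_of_injective _ hinj, Finset.card_univ, Fintype.card_fin]
  have hsset : (s : Set L) = Subtype.val '' Set.range b := by
    rw [hs]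
    simp only [Finset.coe_image, Finset.coe_univ, Set.image_univ]
    exact Set.range_comp Subtype.val ⇑b
  have hspan : Submodule.span F (s : Set L) = H := by
    rw [hsset, ← Submodule.coe_subtype, Submodule.span_image, b.span_eq,
      Submodule.map_top, Submodule.range_subtype]
  set S := LieSubalgebra.lieSpan F L (s : Set L) with hS
  have h1 : Submodule.span F (s : Set L) ≤ S.toSubmodule :=
    Submodule.span_le.mpr (LieSubalgebra.subset_lieSpan)
  have hHS : ∀ w ∈ H, w ∈ S := fun w hw => h1 (hspan ▸ hw)
  have hzS : z ∈ S := S.lie_mem (hHS x hxH) (hHS a haH)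
  have hStop : S = ⊤ := by
    rw [eq_top_iff]
    intro v _
    have hv : v - (f v / f z) • z ∈ H := by
      simp only [hH, LinearMap.mem_ker, map_sub, map_smul, smul_eq_mul]
      field_simp
      simp
    have := S.add_mem (hHS _ hv) (S.smul_mem (f v / f z) hzS)
    simpa using this
  have hle : lieD F L ≤ Module.finrank F H := Nat.sInf_le ⟨s, hcard, hStop⟩
  have hne : H ≠ ⊤ := by
    intro htop
    have : z ∈ H := htop ▸ Submodule.mem_top
    exact hfz this
  have hlt : Module.finrank F H < Module.finrank F L :=
    Submodule.finrank_lt hne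
  omega

/-- Let `L` be a finite-dimensional Lie algebra over a field `F` with `d(L) = dim_F L`, and
let `A` be a maximal abelian Lie subalgebra of `L` containing `[L,L]`.  Then for every
`x ∈ L` the adjoint action of `x` on `A` is multiplication by a scalar in `F`. -/
theorem stmt_3 (F L : Type*) [Field F] [LieRing L] [LieAlgebra F L]
    [FiniteDimensional F L] (h : lieD F L = Module.finrank F L)
    (A : LieSubalgebra F L) (hab : IsLieAbelian A)
    (hder : ∀ x y : L, ⁅x, y⁆ ∈ A)
    (hmax : ∀ B : LieSubalgebra F L, IsLieAbelian B → A ≤ B → B = A) :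
    ∀ x : L, ∃ c : F, ∀ a ∈ A, ⁅x, a⁆ = c • a := by
  intro x
  by_cases hx : x ∈ A
  · refine ⟨0, fun a ha => ?_⟩
    have h0 : (⁅(⟨x, hx⟩ : A), (⟨a, ha⟩ : A)⁆ : A) = 0 := trivial_lie_zero _ _ _ _
    calc ⁅x, a⁆ = ((⁅(⟨x, hx⟩ : A), (⟨a, ha⟩ : A)⁆ : A) : L) := rfl
      _ = ((0 : A) : L) := by rw [h0]
      _ = (0 : F) • a := by simp
  · -- every element of `A` is an eigenvector of `ad x`
    have key : ∀ a ∈ A, ∃ β : F, ⁅x, a⁆ = β • a := by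
      intro a ha
      by_contra hcon
      push_neg at hcon
      have hnspan : ⁅x, a⁆ ∉ Submodule.span F ({x, a} : Set L) := by
        intro hm
        rw [Submodule.mem_span_pair] at hm
        obtain ⟨α, β, hαβ⟩ := hm
        have hαx : α • x = ⁅x, a⁆ - β • a := by rw [← hαβ]; abel
        have hmemA : α • x ∈ A := hαx ▸ A.sub_mem (hder x a) (A.smul_mem β ha)
        rcases eq_or_ne α 0 with rfl | hα
        · refine hcon β ?_
          rw [zero_smul] at hαx
          have := hαx.symm
          rwa [sub_eq_zero] at this
        · refine hx ?_
          have := A.smul_mem α⁻¹ hmemA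
          rwa [smul_smul, inv_mul_cancel₀ hα, one_smul] at this
      exact lieD_aux F L h x a hnspan
    -- upgrade to a single scalar
    by_cases hA : ∀ a ∈ A, a = (0 : L)
    · exact ⟨0, fun a ha => by rw [hA a ha]; simp⟩
    · push_neg at hA
      obtain ⟨a₀, ha₀A, ha₀⟩ := hA
      obtain ⟨c, hc⟩ := key a₀ ha₀A
      refine ⟨c, fun a ha => ?_⟩
      obtain ⟨d, hd⟩ := key a ha
      obtain ⟨e, he⟩ := key (a + a₀) (A.add_mem ha ha₀A)
      rw [lie_add, hd, hc, smul_add] at he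
      have heq : (d - e) • a = (e - c) • a₀ := by
        have := he
        rw [sub_smul, sub_smul]
        linear_combination (norm := module) this
      rcases eq_or_ne d e with heq' | hde
      · subst heq'
        have h2 : (d - c) • a₀ = 0 := by rw [← heq, sub_self, zero_smul]
        have hdc : d - c = 0 := by
          by_contra hne
          exact ha₀ (by
            have := congrArg (fun w => (d - c)⁻¹ • w) h2
            simpa [smul_smul, inv_mul_cancel₀ hne] using this)
        rw [hd, sub_eq_zero.mp hdc]
      · have ha' : a = ((d - e)⁻¹ * (e - c)) • a₀ := by
          have := congrArg (fun w => (d - e)⁻¹ • w) heq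
          simpa [smul_smul, inv_mul_cancel₀ (sub_ne_zero.mpr hde)] using this
        rw [ha', lie_smul, hc, smul_smul, smul_smul, mul_comm c]
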